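/- For all real numbers x ≠ 0 and y, the integral representation y·∫₀¹ [𝟙(x ≤ y·s) − 𝟙(x ≤ 0)] ds = (x−y)·[𝟙(0 > x > y) − 𝟙(0 < x < y)] holds, so that ρ_τ(x−y) − ρ_τ(x) = −y·ψ_τ(x) + y·∫₀¹ [𝟙(x ≤ y·s) − 𝟙(x ≤ 0)] ds. -/

import Mathlib

open MeasureTheory intervalIntegral

lemma indic_intble (c : ℝ) :
    IntervalIntegrable (fun s => if s ≤ c then (1:ℝ) else 0) volume 0 1 := by
  have h : (fun s => if s ≤ c then (1:ℝ) else 0)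
      = Set.indicator {x | x ≤ c} (fun _ => (1:ℝ)) := by
    funext s; simp [Set.indicator_apply, Set.mem_setOf_eq]
  rw [h, intervalIntegrable_iff]
  exact (integrableOn_const (by simp) (by simp)).indicator measurableSet_Iic

lemma int_le (c : ℝ) (h0 : 0 ≤ c) (h1 : c ≤ 1) :
    ∫ s in (0:ℝ)..1, (if s ≤ c then (1:ℝ) else 0) = c := by
  have h : (fun s => if s ≤ c then (1:ℝ) else 0)
      = Set.indicator {x | x ≤ c} (fun _ => (1:ℝ)) := by
    funext s; simp [Set.indicator_apply, Set.mem_setOf_eq]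
  rw [show (∫ s in (0:ℝ)..1, (if s ≤ c then (1:ℝ) else 0))
      = ∫ s in (0:ℝ)..1, Set.indicator {x | x ≤ c} (fun _ => (1:ℝ)) s from by rw [← h],
    intervalIntegral.integral_indicator ⟨h0, h1⟩]
  simp

lemma int_ge (c : ℝ) (h0 : 0 ≤ c) (h1 : c ≤ 1) :
    ∫ s in (0:ℝ)..1, (if c ≤ s then (1:ℝ) else 0) = 1 - c := by
  have hne : ∀ᵐ s : ℝ, s ≠ c := by
    rw [MeasureTheory.ae_iff]
    simpa [Set.setOf_eq_eq_singleton] using measure_singleton (μ := volume) c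
  have hcong : ∫ s in (0:ℝ)..1, (if c ≤ s then (1:ℝ) else 0)
      = ∫ s in (0:ℝ)..1, ((1:ℝ) - if s ≤ c then (1:ℝ) else 0) := by
    apply intervalIntegral.integral_congr_ae
    filter_upwards [hne] with s hs _
    rcases lt_or_gt_of_ne hs with h | h
    · simp [h.le, not_le.2 h]
    · simp [not_le.2 h, h.le]
  rw [hcong, intervalIntegral.integral_sub intervalIntegrable_const (indic_intble c),
    int_le c h0 h1]
  simp

noncomputable def psi (τ x : ℝ) : ℝ := τ - if x < 0 then 1 else 0

noncomputable def rho (τ x : ℝ) : ℝ := x * psi τ x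

/-- The integral representation of the second term in Knight's identity. -/
theorem knight_integral (x y : ℝ) (hx : x ≠ 0) :
    (y * ∫ s in (0:ℝ)..1,
        ((if x ≤ y * s then (1:ℝ) else 0) - (if x ≤ 0 then (1:ℝ) else 0)))
      = (x - y) * ((if y < x ∧ x < 0 then (1:ℝ) else 0) -
          (if 0 < x ∧ x < y then (1:ℝ) else 0))
    ∧ ∀ τ ∈ Set.Ioo (0:ℝ) 1,
        rho τ (x - y) - rho τ x =
          -y * psi τ x +
            y * ∫ s in (0:ℝ)..1,
              ((if x ≤ y * s then (1:ℝ) else 0) - (if x ≤ 0 then (1:ℝ) else 0)) := by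
  have key : (y * ∫ s in (0:ℝ)..1,
        ((if x ≤ y * s then (1:ℝ) else 0) - (if x ≤ 0 then (1:ℝ) else 0)))
      = (x - y) * ((if y < x ∧ x < 0 then (1:ℝ) else 0) -
          (if 0 < x ∧ x < y then (1:ℝ) else 0)) := by
    rcases lt_trichotomy y 0 with hy | hy | hy
    · rcases lt_or_gt_of_ne hx with hxneg | hxpos
      · -- y < 0, x < 0
        by_cases hxy : x ≤ y
        · have hI : ∫ s in (0:ℝ)..1,
              ((if x ≤ y * s then (1:ℝ) else 0) - (if x ≤ 0 then (1:ℝ) else 0)) = 0 := by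
            rw [intervalIntegral.integral_congr (g := fun _ => (0:ℝ))]
            · simp
            · intro s hs
              rw [Set.uIcc_of_le (by norm_num)] at hs
              have h1 : x ≤ y * s := by nlinarith [hs.1, hs.2]
              simp [h1, hxneg.le]
          rw [hI, if_neg (by rintro ⟨a, b⟩; linarith),
            if_neg (by rintro ⟨a, b⟩; linarith)]
          ring
        · push_neg at hxy
          have hy0 : y ≠ 0 := ne_of_lt hy
          have hc0 : 0 ≤ x / y := (div_pos_iff.2 (Or.inr ⟨hxneg, hy⟩)).le
          have hc1 : x / y ≤ 1 := by
            rw [div_le_one_of_neg hy]; linarith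
          have hI : ∫ s in (0:ℝ)..1,
              ((if x ≤ y * s then (1:ℝ) else 0) - (if x ≤ 0 then (1:ℝ) else 0))
              = x / y - 1 := by
            have hcong : ∀ s : ℝ, ((if x ≤ y * s then (1:ℝ) else 0) - (if x ≤ 0 then (1:ℝ) else 0))
                = (if s ≤ x / y then (1:ℝ) else 0) - 1 := by
              intro s
              rw [if_pos hxneg.le]
              congr 1
              apply if_congr _ rfl rfl
              rw [le_div_iff_of_neg hy, mul_comm]
            simp_rw [hcong]
            rw [intervalIntegral.integral_sub (indic_intble _) intervalIntegrable_const,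
              int_le _ hc0 hc1]
            simp
          rw [hI, if_pos (show y < x ∧ x < 0 from ⟨hxy, hxneg⟩),
            if_neg (show ¬(0 < x ∧ x < y) by rintro ⟨a, b⟩; linarith)]
          field_simp
          norm_num
      · -- y < 0, x > 0
        have hI : ∫ s in (0:ℝ)..1,
            ((if x ≤ y * s then (1:ℝ) else 0) - (if x ≤ 0 then (1:ℝ) else 0)) = 0 := by
          rw [intervalIntegral.integral_congr (g := fun _ => (0:ℝ))]
          · simp
          · intro s hs
            rw [Set.uIcc_of_le (by norm_num)] at hs
            have h1 : ¬ x ≤ y * s := by nlinarith [hs.1, hs.2]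
            simp [h1, not_le.2 hxpos]
        rw [hI, if_neg (by rintro ⟨a, b⟩; linarith),
          if_neg (by rintro ⟨a, b⟩; linarith)]
        ring
    · -- y = 0
      subst hy
      have hI : ∫ s in (0:ℝ)..1,
          ((if x ≤ 0 * s then (1:ℝ) else 0) - (if x ≤ 0 then (1:ℝ) else 0)) = 0 := by
        simp
      have hfalse : ¬(0 < x ∧ x < 0) := by rintro ⟨a, b⟩; linarith
      rw [hI, if_neg hfalse]
      ring
    · rcases lt_or_gt_of_ne hx with hxneg | hxpos
      · -- y > 0, x < 0
        have hI : ∫ s in (0:ℝ)..1,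
            ((if x ≤ y * s then (1:ℝ) else 0) - (if x ≤ 0 then (1:ℝ) else 0)) = 0 := by
          rw [intervalIntegral.integral_congr (g := fun _ => (0:ℝ))]
          · simp
          · intro s hs
            rw [Set.uIcc_of_le (by norm_num)] at hs
            have h1 : x ≤ y * s := by nlinarith [hs.1, hs.2]
            simp [h1, hxneg.le]
        rw [hI, if_neg (by rintro ⟨a, b⟩; linarith),
          if_neg (by rintro ⟨a, b⟩; linarith)]
        ring
      · -- y > 0, x > 0
        by_cases hxy : y ≤ x
        · have hne : ∀ᵐ s : ℝ, s ≠ 1 := by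
            rw [MeasureTheory.ae_iff]
            simpa [Set.setOf_eq_eq_singleton] using measure_singleton (μ := volume) (1:ℝ)
          have hI : ∫ s in (0:ℝ)..1,
              ((if x ≤ y * s then (1:ℝ) else 0) - (if x ≤ 0 then (1:ℝ) else 0)) = 0 := by
            rw [intervalIntegral.integral_congr_ae (g := fun _ => (0:ℝ))]
            · simp
            · filter_upwards [hne] with s hs1 hsm
              rw [Set.uIoc_of_le (by norm_num)] at hsm
              have hslt : s < 1 := lt_of_le_of_ne hsm.2 hs1
              have h1 : ¬ x ≤ y * s := by nlinarith [hsm.1]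
              simp [h1, not_le.2 hxpos]
          rw [hI, if_neg (by rintro ⟨a, b⟩; linarith),
            if_neg (by rintro ⟨a, b⟩; linarith)]
          ring
        · push_neg at hxy
          have hy0 : y ≠ 0 := ne_of_gt hy
          have hc0 : 0 ≤ x / y := (div_pos hxpos hy).le
          have hc1 : x / y ≤ 1 := by
            rw [div_le_one hy]; linarith
          have hI : ∫ s in (0:ℝ)..1,
              ((if x ≤ y * s then (1:ℝ) else 0) - (if x ≤ 0 then (1:ℝ) else 0))
              = 1 - x / y := by
            have hcong : ∀ s : ℝ, ((if x ≤ y * s then (1:ℝ) else 0) - (if x ≤ 0 then (1:ℝ) else 0))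
                = (if x / y ≤ s then (1:ℝ) else 0) := by
              intro s
              rw [if_neg (not_le.2 hxpos), sub_zero]
              apply if_congr _ rfl rfl
              rw [div_le_iff₀ hy, mul_comm]
            simp_rw [hcong]
            exact int_ge _ hc0 hc1
          rw [hI, if_neg (show ¬(y < x ∧ x < 0) by rintro ⟨a, b⟩; linarith),
            if_pos (show 0 < x ∧ x < y from ⟨hxpos, hxy⟩)]
          field_simp
          ring
  refine ⟨key, ?_⟩
  intro τ hτ
  rw [key]
  unfold rho psi
  rcases lt_or_gt_of_ne hx with h | h
  · rw [if_pos h, if_neg (show ¬(0 < x ∧ x < y) by rintro ⟨a, b⟩; linarith)]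
    by_cases hyx : y < x
    · rw [if_pos (show y < x ∧ x < 0 from ⟨hyx, h⟩),
        if_neg (show ¬(x - y < 0) by push_neg; linarith)]
      ring
    · push_neg at hyx
      rw [if_neg (show ¬(y < x ∧ x < 0) by rintro ⟨a, b⟩; linarith)]
      rcases eq_or_lt_of_le hyx with heq | hlt
      · rw [← heq]
        simp
        try ring
      · rw [if_pos (show x - y < 0 by linarith)]
        ring
  · rw [if_neg (not_lt.2 h.le), if_neg (show ¬(y < x ∧ x < 0) by rintro ⟨a, b⟩; linarith)]
    by_cases hxy : x < y
    · rw [if_pos (show 0 < x ∧ x < y from ⟨h, hxy⟩),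
        if_pos (show x - y < 0 by linarith)]
      ring
    · push_neg at hxy
      rw [if_neg (show ¬(0 < x ∧ x < y) by rintro ⟨a, b⟩; linarith)]
      rcases eq_or_lt_of_le hxy with heq | hlt
      · rw [heq]
        simp
        try ring
      · rw [if_neg (show ¬(x - y < 0) by push_neg; linarith)]
        ring
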